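/- For all c ∈ ℤ, t ∈ ℕ and integers p ≥ 1, one has q^{−pt}·[K,K̃;−c;t] = Σ_{j=0}^{t} (−1)^j · [K,K̃;p−c;t−j] · [p+j−1 choose j]_q · K^{j} · q^{−cj} in D_q. In particular, for integers c ≥ 1 and t ≥ 0, [K,K̃;−c;t] = Σ_{j=0}^{t} (−1)^j · [K,K̃;t−j] · [c+j−1 choose j]_q · K^{j} · q^{c(t−j)}. -/

import Mathlib

noncomputable section

/-- Generators of the quantum double `D_q`. -/
inductive DGen : Type
  | E | F | K | Kinv | Kt | Ktinv
  deriving DecidableEq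

/-- The defining relations of `D_q`. -/
inductive DRel (k : Type) [Field k] (q : k) :
    FreeAlgebra k DGen → FreeAlgebra k DGen → Prop
  | KE : DRel k q (FreeAlgebra.ι k DGen.K * FreeAlgebra.ι k DGen.E)
      ((q ^ 2) • (FreeAlgebra.ι k DGen.E * FreeAlgebra.ι k DGen.K))
  | KF : DRel k q (FreeAlgebra.ι k DGen.K * FreeAlgebra.ι k DGen.F)
      (((q ^ 2)⁻¹) • (FreeAlgebra.ι k DGen.F * FreeAlgebra.ι k DGen.K))
  | KtE : DRel k q (FreeAlgebra.ι k DGen.Kt * FreeAlgebra.ι k DGen.E)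
      ((q ^ 2) • (FreeAlgebra.ι k DGen.E * FreeAlgebra.ι k DGen.Kt))
  | KtF : DRel k q (FreeAlgebra.ι k DGen.Kt * FreeAlgebra.ι k DGen.F)
      (((q ^ 2)⁻¹) • (FreeAlgebra.ι k DGen.F * FreeAlgebra.ι k DGen.Kt))
  | KKinv : DRel k q (FreeAlgebra.ι k DGen.K * FreeAlgebra.ι k DGen.Kinv) 1
  | KinvK : DRel k q (FreeAlgebra.ι k DGen.Kinv * FreeAlgebra.ι k DGen.K) 1
  | KtKtinv : DRel k q (FreeAlgebra.ι k DGen.Kt * FreeAlgebra.ι k DGen.Ktinv) 1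
  | KtinvKt : DRel k q (FreeAlgebra.ι k DGen.Ktinv * FreeAlgebra.ι k DGen.Kt) 1
  | KKt : DRel k q (FreeAlgebra.ι k DGen.K * FreeAlgebra.ι k DGen.Kt)
      (FreeAlgebra.ι k DGen.Kt * FreeAlgebra.ι k DGen.K)
  | EF : DRel k q (FreeAlgebra.ι k DGen.E * FreeAlgebra.ι k DGen.F)
      (FreeAlgebra.ι k DGen.F * FreeAlgebra.ι k DGen.E +
        ((q - q⁻¹)⁻¹) • (FreeAlgebra.ι k DGen.K - FreeAlgebra.ι k DGen.Ktinv))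

/-- The quantum double `D_q` of `U_q(sl2)^{≤0}`, presented by generators and relations. -/
abbrev Dq (k : Type) [Field k] (q : k) := RingQuot (DRel k q)

def DE (k : Type) [Field k] (q : k) : Dq k q :=
  RingQuot.mkAlgHom k (DRel k q) (FreeAlgebra.ι k DGen.E)
def DF (k : Type) [Field k] (q : k) : Dq k q :=
  RingQuot.mkAlgHom k (DRel k q) (FreeAlgebra.ι k DGen.F)
def DK (k : Type) [Field k] (q : k) : Dq k q :=
  RingQuot.mkAlgHom k (DRel k q) (FreeAlgebra.ι k DGen.K)
def DKinv (k : Type) [Field k] (q : k) : Dq k q :=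
  RingQuot.mkAlgHom k (DRel k q) (FreeAlgebra.ι k DGen.Kinv)
def DKt (k : Type) [Field k] (q : k) : Dq k q :=
  RingQuot.mkAlgHom k (DRel k q) (FreeAlgebra.ι k DGen.Kt)
def DKtinv (k : Type) [Field k] (q : k) : Dq k q :=
  RingQuot.mkAlgHom k (DRel k q) (FreeAlgebra.ι k DGen.Ktinv)

/-- The quantum integer `[n]_q = (qⁿ - q⁻ⁿ)/(q - q⁻¹)`. -/
def qint (k : Type) [Field k] (q : k) (n : ℕ) : k := (q ^ n - q⁻¹ ^ n) / (q - q⁻¹)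

/-- The quantum factorial `[n]_q!`. -/
def qfact (k : Type) [Field k] (q : k) : ℕ → k
  | 0 => 1
  | n + 1 => qfact k q n * qint k q (n + 1)

/-- The Gaussian binomial coefficient `[m choose n]_q`. -/
def qbinom (k : Type) [Field k] (q : k) (m n : ℕ) : k :=
  qfact k q m / (qfact k q n * qfact k q (m - n))

/-- The element `[K,K̃;c;t] = ∏_{s=1}^t (K q^{c-s+1} - K̃⁻¹ q^{-c+s-1})/(q^s - q^{-s})` of `D_q`. -/
def KKtc (k : Type) [Field k] (q : k) (c : ℤ) : ℕ → Dq k q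
  | 0 => 1
  | t + 1 =>
      KKtc k q c t *
        ((q ^ ((t : ℤ) + 1) - q ^ (-((t : ℤ) + 1)))⁻¹ •
          (q ^ (c - (t : ℤ)) • DK k q - q ^ ((t : ℤ) - c) • DKtinv k q))

namespace KKtcAux

variable {k : Type} [Field k] {q : k}

lemma hKiK : DKtinv k q * DK k q = DK k q * DKtinv k q := by
  have h1 : DKt k q * DKtinv k q = 1 := by
    simpa [DKt, DKtinv, map_mul] using RingQuot.mkAlgHom_rel k (DRel.KtKtinv (k := k) (q := q))
  have h2 : DKtinv k q * DKt k q = 1 := by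
    simpa [DKt, DKtinv, map_mul] using RingQuot.mkAlgHom_rel k (DRel.KtinvKt (k := k) (q := q))
  have h3 : DK k q * DKt k q = DKt k q * DK k q := by
    simpa [DK, DKt, map_mul] using RingQuot.mkAlgHom_rel k (DRel.KKt (k := k) (q := q))
  calc DKtinv k q * DK k q = DKtinv k q * DK k q * (DKt k q * DKtinv k q) := by rw [h1, mul_one]
    _ = DKtinv k q * (DK k q * DKt k q) * DKtinv k q := by rw [mul_assoc, mul_assoc, mul_assoc]
    _ = DKtinv k q * (DKt k q * DK k q) * DKtinv k q := by rw [h3]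
    _ = (DKtinv k q * DKt k q) * (DK k q * DKtinv k q) := by rw [mul_assoc, mul_assoc, mul_assoc]
    _ = DK k q * DKtinv k q := by rw [h2, one_mul]

/-- numerator `q^a • K - q^{-a} • K̃⁻¹`. -/
def LN (k : Type) [Field k] (q : k) (a : ℤ) : Dq k q :=
  q ^ a • DK k q - q ^ (-a) • DKtinv k q

/-- cleared product. -/
def MM (k : Type) [Field k] (q : k) (c : ℤ) : ℕ → Dq k q
  | 0 => 1
  | t + 1 => MM k q c t * LN k q (c - t)

def dd (k : Type) [Field k] (q : k) (m : ℕ) : k := q ^ (m : ℤ) - q ^ (-(m : ℤ))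

def ee (k : Type) [Field k] (q : k) : ℕ → k
  | 0 => 1
  | t + 1 => ee k q t * dd k q (t + 1)

section
variable (hq0 : q ≠ 0) (hq : ∀ n : ℕ, 0 < n → q ^ n ≠ 1)
include hq0 hq

lemma dd_ne (m : ℕ) : dd k q (m + 1) ≠ 0 := by
  intro h
  apply hq (2 * (m + 1)) (by omega)
  have h' : q ^ ((m + 1 : ℕ) : ℤ) = q ^ (-((m + 1 : ℕ) : ℤ)) := sub_eq_zero.mp h
  have key : q ^ ((2 * (m + 1) : ℕ) : ℤ) = 1 := by
    rw [show ((2 * (m + 1) : ℕ) : ℤ) = ((m + 1 : ℕ) : ℤ) + ((m + 1 : ℕ) : ℤ) by push_cast; ring,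
      zpow_add₀ hq0]
    nth_rewrite 1 [h']
    rw [← zpow_add₀ hq0, show -((m + 1 : ℕ) : ℤ) + ((m + 1 : ℕ) : ℤ) = 0 by ring, zpow_zero]
  rwa [zpow_natCast] at key

lemma ee_ne (t : ℕ) : ee k q t ≠ 0 := by
  induction t with
  | zero => simp [ee]
  | succ n ih => exact mul_ne_zero ih (dd_ne hq0 hq n)

lemma qsub_ne : q - q⁻¹ ≠ 0 := by
  intro h
  apply hq 2 (by omega)
  have := sub_eq_zero.mp h
  field_simp at this
  linear_combination this

lemma qint_ne (n : ℕ) : qint k q (n + 1) ≠ 0 := by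
  apply div_ne_zero _ (qsub_ne hq0 hq)
  intro h
  apply hq (2 * (n + 1)) (by omega)
  have h' : q ^ (n + 1) = q⁻¹ ^ (n + 1) := sub_eq_zero.mp h
  rw [inv_pow] at h'
  have : q ^ (n + 1) * q ^ (n + 1) = 1 := by
    nth_rewrite 1 [h']
    exact inv_mul_cancel₀ (pow_ne_zero _ hq0)
  calc q ^ (2 * (n + 1)) = q ^ (n + 1) * q ^ (n + 1) := by ring
    _ = 1 := this

lemma qfact_ne (n : ℕ) : qfact k q n ≠ 0 := by
  induction n with
  | zero => simp [qfact]
  | succ m ih => exact mul_ne_zero ih (qint_ne hq0 hq m)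

lemma qbinom_zero (m : ℕ) : qbinom k q m 0 = 1 := by
  simp [qbinom, qfact, qfact_ne hq0 hq m]

lemma qbinom_self (m : ℕ) : qbinom k q m m = 1 := by
  simp [qbinom, qfact, qfact_ne hq0 hq m]

lemma hS_ne : q ^ 2 - 1 ≠ 0 := by
  intro h
  apply qsub_ne hq0 hq
  have h2 : q - q⁻¹ = q⁻¹ * (q ^ 2 - 1) := by
    rw [mul_sub, mul_one, sq, inv_mul_cancel_left₀ hq0]
  rw [h2, h, mul_zero]

lemma qint_eq (n : ℕ) :
    qint k q (n + 1) = (q ^ (2 * n + 2) - 1) / (q ^ n * (q ^ 2 - 1)) := by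
  have h2 : q ^ n * (q ^ 2 - 1) ≠ 0 := mul_ne_zero (pow_ne_zero _ hq0) (hS_ne hq0 hq)
  rw [qint, div_eq_div_iff (qsub_ne hq0 hq) h2]
  simp only [inv_pow]
  field_simp
  ring

lemma qint_pascal (m i : ℕ) :
    q ^ (m + 1) * qint k q (m + i + 2) = q ^ (m + i + 2) * qint k q (m + 1) + qint k q (i + 1) := by
  have hS := hS_ne hq0 hq
  have d1 : q ^ (m + i + 1) * (q ^ 2 - 1) ≠ 0 := mul_ne_zero (pow_ne_zero _ hq0) hS
  have d2 : q ^ m * (q ^ 2 - 1) ≠ 0 := mul_ne_zero (pow_ne_zero _ hq0) hS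
  have d3 : q ^ i * (q ^ 2 - 1) ≠ 0 := mul_ne_zero (pow_ne_zero _ hq0) hS
  rw [show m + i + 2 = m + i + 1 + 1 from rfl, qint_eq hq0 hq, qint_eq hq0 hq,
    qint_eq hq0 hq, ← mul_div_assoc, ← mul_div_assoc, div_add_div _ _ d2 d3,
    div_eq_div_iff d1 (mul_ne_zero d2 d3)]
  ring

lemma pascal (m i : ℕ) :
    qbinom k q (m + i + 2) (i + 1)
      = q ^ (i + 1) * qbinom k q (m + i + 1) (i + 1)
        + (q ^ (m + 1))⁻¹ * qbinom k q (m + i + 1) i := by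
  have e1 : m + i + 2 - (i + 1) = m + 1 := by omega
  have e2 : m + i + 1 - (i + 1) = m := by omega
  have e3 : m + i + 1 - i = m + 1 := by omega
  simp only [qbinom, e1, e2, e3]
  have hq1 : qfact k q (m + i + 2) = qfact k q (m + i + 1) * qint k q (m + i + 2) := rfl
  have hq2 : qfact k q (m + 1) = qfact k q m * qint k q (m + 1) := rfl
  have hq3 : qfact k q (i + 1) = qfact k q i * qint k q (i + 1) := rfl
  have hP : (q : k) ^ (m + 1) ≠ 0 := pow_ne_zero _ hq0
  have hf : ∀ n : ℕ, qfact k q n ≠ 0 := qfact_ne hq0 hq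
  have hi : ∀ n : ℕ, qint k q (n + 1) ≠ 0 := qint_ne hq0 hq
  have hqi : qint k q (m + i + 2) =
      (q ^ (m + i + 2) * qint k q (m + 1) + qint k q (i + 1)) / q ^ (m + 1) := by
    rw [eq_div_iff hP]
    linear_combination qint_pascal hq0 hq m i
  rw [hq1, hq2, hq3, hqi, inv_mul_eq_div]
  have d1 : qfact k q i * qint k q (i + 1) * (qfact k q m * qint k q (m + 1)) ≠ 0 :=
    mul_ne_zero (mul_ne_zero (hf i) (hi i)) (mul_ne_zero (hf m) (hi m))
  have d2 : qfact k q i * qint k q (i + 1) * qfact k q m ≠ 0 :=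
    mul_ne_zero (mul_ne_zero (hf i) (hi i)) (hf m)
  have d3 : qfact k q i * (qfact k q m * qint k q (m + 1)) ≠ 0 :=
    mul_ne_zero (hf i) (mul_ne_zero (hf m) (hi m))
  rw [div_div, ← mul_div_assoc, div_div, ← mul_div_assoc,
    div_add_div _ _ d2 (mul_ne_zero d3 hP),
    div_eq_div_iff (mul_ne_zero hP d1) (mul_ne_zero d2 (mul_ne_zero d3 hP))]
  ring

end

lemma KKtc_succ (c : ℤ) (t : ℕ) :
    KKtc k q c (t + 1) = KKtc k q c t * ((dd k q (t + 1))⁻¹ • LN k q (c - t)) := by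
  have h1 : dd k q (t + 1) = q ^ ((t : ℤ) + 1) - q ^ (-((t : ℤ) + 1)) := by
    simp only [dd]; push_cast; ring_nf
  have h2 : LN k q (c - t) = q ^ (c - (t : ℤ)) • DK k q - q ^ ((t : ℤ) - c) • DKtinv k q := by
    rw [LN, neg_sub]
  rw [h1, h2]
  rfl

lemma KKtc_eq (c : ℤ) (t : ℕ) :
    KKtc k q c t = (ee k q t)⁻¹ • MM k q c t := by
  induction t with
  | zero =>
    show (1 : Dq k q) = (ee k q 0)⁻¹ • (1 : Dq k q)
    simp [ee]
  | succ n ih =>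
    rw [KKtc_succ, ih, smul_mul_assoc, mul_smul_comm, smul_smul, ← mul_inv]
    rfl

section
variable (hq0 : q ≠ 0) (hq : ∀ n : ℕ, 0 < n → q ^ n ≠ 1)
include hq0 hq

set_option maxHeartbeats 1000000 in
/-- core identity, cleared form. -/
lemma star_M (c : ℤ) (t : ℕ) :
    (q ^ ((t : ℤ) + 1)) • MM k q (1 - c) (t + 1)
      = MM k q (-c) (t + 1)
        + (q ^ ((1 : ℤ) - c) * dd k q (t + 1)) • (MM k q (-c) t * DK k q) := by
  induction t with
  | zero =>
    simp only [MM, LN, dd, one_mul]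
    match_scalars <;>
    · push_cast
      simp only [zpow_add₀ hq0, zpow_sub₀ hq0, zpow_neg, zpow_one, zpow_zero, sub_zero,
        add_zero, zero_add]
      generalize hB : (q : k) ^ (c : ℤ) = B
      have hB0 : B ≠ 0 := hB ▸ zpow_ne_zero _ hq0
      field_simp
      try ring
      try (ring_nf; field_simp; ring)
      try (field_simp; ring)
      try (ring_nf; field_simp; ring)
      try (field_simp; ring)
  | succ n ih =>
    have ih' : MM k q (1 - c) (n + 1)
        = (q ^ ((n : ℤ) + 1))⁻¹ • (MM k q (-c) (n + 1)
            + (q ^ ((1 : ℤ) - c) * dd k q (n + 1)) • (MM k q (-c) n * DK k q)) := by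
      rw [← ih, smul_smul, inv_mul_cancel₀ (zpow_ne_zero _ hq0), one_smul]
    show (q ^ (((n + 1 : ℕ) : ℤ) + 1)) • (MM k q (1 - c) (n + 1) * LN k q (1 - c - (n + 1 : ℕ)))
      = MM k q (-c) (n + 1) * LN k q (-c - (n + 1 : ℕ))
        + (q ^ ((1 : ℤ) - c) * dd k q (n + 1 + 1)) • ((MM k q (-c) n * LN k q (-c - n)) * DK k q)
    rw [ih']
    simp only [MM, LN, dd, mul_sub, sub_mul, smul_sub, sub_smul, smul_smul, mul_smul_comm,
      smul_mul_assoc, mul_assoc, smul_add, add_mul, add_smul]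
    simp only [hKiK, mul_smul_comm, smul_smul]
    match_scalars <;>
    · push_cast
      simp only [zpow_add₀ hq0, zpow_sub₀ hq0, zpow_neg, zpow_one, zpow_zero, sub_zero,
        add_zero, zero_add]
      generalize hA : (q : k) ^ (n : ℤ) = A
      generalize hB : (q : k) ^ (c : ℤ) = B
      have hA0 : A ≠ 0 := hA ▸ zpow_ne_zero _ hq0
      have hB0 : B ≠ 0 := hB ▸ zpow_ne_zero _ hq0
      field_simp
      try ring
      try (ring_nf; field_simp; ring)
      try (field_simp; ring)
      try (ring_nf; field_simp; ring)

/-- core identity for `KKtc`. -/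
lemma star (c : ℤ) (t : ℕ) :
    KKtc k q (1 - c) (t + 1)
      = (q ^ (-((t : ℤ) + 1))) •
          (KKtc k q (-c) (t + 1) + (q ^ ((1 : ℤ) - c)) • (KKtc k q (-c) t * DK k q)) := by
  have h := star_M hq0 hq c t
  have hM : MM k q (1 - c) (t + 1)
      = (q ^ ((t : ℤ) + 1))⁻¹ • (MM k q (-c) (t + 1)
          + (q ^ ((1 : ℤ) - c) * dd k q (t + 1)) • (MM k q (-c) t * DK k q)) := by
    rw [← h, smul_smul, inv_mul_cancel₀ (zpow_ne_zero _ hq0), one_smul]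
  rw [KKtc_eq, KKtc_eq, KKtc_eq, hM]
  have he : ee k q t ≠ 0 := ee_ne hq0 hq t
  have hd : dd k q (t + 1) ≠ 0 := dd_ne hq0 hq t
  have he1 : ee k q (t + 1) = ee k q t * dd k q (t + 1) := rfl
  have hT : (q : k) ^ ((t : ℤ) + 1) ≠ 0 := zpow_ne_zero _ hq0
  rw [he1, smul_mul_assoc]
  match_scalars <;>
  · simp only [zpow_neg]
    field_simp
    try ring

end

lemma sum_shift (d : ℤ) (t : ℕ) (a : ℕ → k) :
    ∑ j ∈ Finset.range (t + 1 + 1), a j • (KKtc k q d (t + 1 - j) * DK k q ^ j)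
      = a 0 • KKtc k q d (t + 1)
        + (∑ i ∈ Finset.range (t + 1), a (i + 1) • (KKtc k q d (t - i) * DK k q ^ i))
            * DK k q := by
  rw [Finset.sum_range_succ', Finset.sum_mul, add_comm]
  congr 1
  · simp
  · apply Finset.sum_congr rfl
    intro i hi
    have h1 : t + 1 - (i + 1) = t - i := by omega
    rw [h1, pow_succ, smul_mul_assoc, mul_assoc]

section
variable (hq0 : q ≠ 0) (hq : ∀ n : ℕ, 0 < n → q ^ n ≠ 1)
include hq0 hq

set_option maxHeartbeats 1600000 in
lemma key : ∀ p : ℕ, 1 ≤ p → ∀ (t : ℕ) (c : ℤ),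
    (q ^ (-((p : ℤ) * t))) • KKtc k q (-c) t =
      ∑ j ∈ Finset.range (t + 1),
        ((-1 : k) ^ j * qbinom k q (p + j - 1) j * q ^ (-(c * (j : ℤ)))) •
          (KKtc k q ((p : ℤ) - c) (t - j) * DK k q ^ j) := by
  intro p hp
  induction p, hp using Nat.le_induction with
  | base =>
    intro t c
    induction t with
    | zero =>
      simp [KKtc, qbinom_zero hq0 hq]
    | succ n IH =>
      rw [sum_shift]
      -- split off the inner sum and rescale it
      have hco : ∀ i : ℕ,
          ((-1 : k) ^ (i + 1) * qbinom k q (1 + (i + 1) - 1) (i + 1) * q ^ (-(c * ((i + 1 : ℕ) : ℤ))))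
            = (-(q ^ (-c))) * ((-1 : k) ^ i * qbinom k q (1 + i - 1) i * q ^ (-(c * ((i : ℕ) : ℤ)))) := by
        intro i
        rw [show 1 + (i + 1) - 1 = i + 1 by omega, show 1 + i - 1 = i by omega,
          qbinom_self hq0 hq, qbinom_self hq0 hq, pow_succ,
          show -(c * ((i + 1 : ℕ) : ℤ)) = -c + -(c * ((i : ℕ) : ℤ)) by push_cast; ring,
          zpow_add₀ hq0]
        ring
      have hsum : (∑ i ∈ Finset.range (n + 1),
            ((-1 : k) ^ (i + 1) * qbinom k q (1 + (i + 1) - 1) (i + 1)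
              * q ^ (-(c * ((i + 1 : ℕ) : ℤ)))) •
              (KKtc k q ((1 : ℕ) - c) (n - i) * DK k q ^ i))
          = (-(q ^ (-c))) • ((q ^ (-(((1 : ℕ) : ℤ) * (n : ℤ)))) • KKtc k q (-c) n) := by
        rw [IH, Finset.smul_sum]
        exact Finset.sum_congr rfl fun i _ => by rw [smul_smul, hco i]
      rw [hsum, show ((-1 : k) ^ 0 * qbinom k q (1 + 0 - 1) 0 * q ^ (-(c * ((0 : ℕ) : ℤ)))) = 1 by
        simp [qbinom_zero hq0 hq]]
      rw [one_smul, show ((1 : ℕ) : ℤ) - c = 1 - c by push_cast; ring, star hq0 hq c n]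
      rw [smul_mul_assoc, smul_mul_assoc]
      match_scalars <;>
      · simp only [← zpow_natCast q, ← zpow_neg, ← zpow_add₀ hq0, one_mul, mul_one, neg_mul,
          mul_neg, neg_neg]
        try norm_num
        try (congr 1; push_cast; ring)
        try (rw [← zpow_neg]; congr 1; push_cast; ring)
  | succ p hp ih =>
    intro t c
    induction t with
    | zero =>
      simp [KKtc, qbinom_zero hq0 hq]
    | succ n IH =>
      obtain ⟨m, rfl⟩ : ∃ m, p = m + 1 := ⟨p - 1, by omega⟩
      rw [sum_shift]
      -- Pascal split of the inner-sum coefficients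
      have hco : ∀ i : ℕ,
          ((-1 : k) ^ (i + 1) * qbinom k q (m + 1 + 1 + (i + 1) - 1) (i + 1)
              * q ^ (-(c * ((i + 1 : ℕ) : ℤ))))
            = ((-1 : k) ^ (i + 1) * qbinom k q (m + 1 + (i + 1) - 1) (i + 1)
                * q ^ (-((c - 1) * ((i + 1 : ℕ) : ℤ))))
              + (-(q ^ (-c - ((m : ℤ) + 1))))
                * ((-1 : k) ^ i * qbinom k q (m + 1 + 1 + i - 1) i * q ^ (-(c * ((i : ℕ) : ℤ)))) := by
        intro i
        rw [show m + 1 + 1 + (i + 1) - 1 = m + i + 2 by omega,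
          show m + 1 + (i + 1) - 1 = m + i + 1 by omega,
          show m + 1 + 1 + i - 1 = m + i + 1 by omega,
          pascal hq0 hq m i,
          show -((c - 1) * ((i + 1 : ℕ) : ℤ)) = ((i + 1 : ℕ) : ℤ) + -(c * ((i + 1 : ℕ) : ℤ)) by
            push_cast; ring,
          zpow_add₀ hq0, zpow_natCast]
        have z2 : (q : k) ^ (-c - ((m : ℤ) + 1)) * q ^ (-(c * ((i : ℕ) : ℤ)))
            = (q ^ (m + 1))⁻¹ * q ^ (-(c * ((i + 1 : ℕ) : ℤ))) := by
          rw [← zpow_natCast q (m + 1), ← zpow_neg, ← zpow_add₀ hq0, ← zpow_add₀ hq0]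
          congr 1
          push_cast
          ring
        linear_combination ((-1 : k) ^ i * qbinom k q (m + i + 1) i) * z2
      have hsplit : (∑ i ∈ Finset.range (n + 1),
            ((-1 : k) ^ (i + 1) * qbinom k q (m + 1 + 1 + (i + 1) - 1) (i + 1)
              * q ^ (-(c * ((i + 1 : ℕ) : ℤ)))) •
              (KKtc k q ((m + 1 + 1 : ℕ) - c) (n - i) * DK k q ^ i))
          = (∑ i ∈ Finset.range (n + 1),
              ((-1 : k) ^ (i + 1) * qbinom k q (m + 1 + (i + 1) - 1) (i + 1)
                * q ^ (-((c - 1) * ((i + 1 : ℕ) : ℤ)))) •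
                (KKtc k q ((m + 1 + 1 : ℕ) - c) (n - i) * DK k q ^ i))
            + (-(q ^ (-c - ((m : ℤ) + 1)))) • ((q ^ (-(((m + 1 + 1 : ℕ) : ℤ) * (n : ℤ))))
                • KKtc k q (-c) n) := by
        rw [IH, Finset.smul_sum, ← Finset.sum_add_distrib]
        refine Finset.sum_congr rfl fun i _ => ?_
        rw [smul_smul, ← add_smul, hco i]
      -- outer induction hypothesis at (n+1, c-1)
      have h1 := ih (n + 1) (c - 1)
      rw [sum_shift] at h1
      rw [show ((m + 1 : ℕ) : ℤ) - (c - 1) = ((m + 1 + 1 : ℕ) : ℤ) - c by push_cast; ring,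
        show -(c - 1) = 1 - c by ring,
        show ((-1 : k) ^ 0 * qbinom k q (m + 1 + 0 - 1) 0 * q ^ (-((c - 1) * ((0 : ℕ) : ℤ)))) = 1 by
          simp [qbinom_zero hq0 hq], one_smul] at h1
      rw [hsplit, show ((-1 : k) ^ 0 * qbinom k q (m + 1 + 1 + 0 - 1) 0
          * q ^ (-(c * ((0 : ℕ) : ℤ)))) = 1 by simp [qbinom_zero hq0 hq], one_smul]
      rw [add_mul, ← add_assoc, ← h1, star hq0 hq c n]
      rw [smul_mul_assoc, smul_mul_assoc]
      match_scalars <;>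
      · simp only [← zpow_natCast q, ← zpow_neg, ← zpow_add₀ hq0, one_mul, mul_one, neg_mul,
          mul_neg, neg_neg]
        try norm_num
        try (congr 1; push_cast; ring)
        try (rw [← zpow_neg]; congr 1; push_cast; ring)

end

end KKtcAux

open KKtcAux

/-- for `c : ℤ`, `t : ℕ` and `p ≥ 1`,
`q^{−pt}·[K,K̃;−c;t] = Σ_{j=0}^{t} (−1)^j·[K,K̃;p−c;t−j]·[p+j−1 choose j]_q·K^j·q^{−cj}`;
in particular for integers `c ≥ 1`, `t ≥ 0`,
`[K,K̃;−c;t] = Σ_{j=0}^{t} (−1)^j·[K,K̃;t−j]·[c+j−1 choose j]_q·K^j·q^{c(t−j)}`. -/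

theorem KKtc_reduction_K (k : Type) [Field k] (q : k)
    (hq0 : q ≠ 0) (hq : ∀ n : ℕ, 0 < n → q ^ n ≠ 1) :
    (∀ (c : ℤ) (t p : ℕ), 1 ≤ p →
        (q ^ (-((p : ℤ) * t))) • KKtc k q (-c) t =
          ∑ j ∈ Finset.range (t + 1),
            ((-1 : k) ^ j * qbinom k q (p + j - 1) j * q ^ (-(c * (j : ℤ)))) •
              (KKtc k q ((p : ℤ) - c) (t - j) * DK k q ^ j)) ∧
    (∀ c t : ℕ, 1 ≤ c →
        KKtc k q (-(c : ℤ)) t =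
          ∑ j ∈ Finset.range (t + 1),
            ((-1 : k) ^ j * qbinom k q (c + j - 1) j * q ^ (c * (t - j))) •
              (KKtc k q 0 (t - j) * DK k q ^ j)) := by
  constructor
  · intro c t p hp
    exact key hq0 hq p hp t c
  · intro c t hc
    have h := key hq0 hq c hc t (c : ℤ)
    simp only [sub_self] at h
    have h2 : KKtc k q (-(c : ℤ)) t
        = (q ^ ((c : ℤ) * (t : ℤ))) • ((q ^ (-((c : ℤ) * (t : ℤ)))) • KKtc k q (-(c : ℤ)) t) := by
      rw [smul_smul, ← zpow_add₀ hq0, show (c : ℤ) * (t : ℤ) + -((c : ℤ) * (t : ℤ)) = 0 by ring,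
        zpow_zero, one_smul]
    rw [h2, h, Finset.smul_sum]
    refine Finset.sum_congr rfl fun j hj => ?_
    have hj' : j ≤ t := by
      have := Finset.mem_range.mp hj; omega
    rw [smul_smul]
    congr 1
    rw [← zpow_natCast q (c * (t - j)),
      show ((c * (t - j) : ℕ) : ℤ) = (c : ℤ) * (t : ℤ) - (c : ℤ) * (j : ℤ) by
        push_cast [hj']; ring,
      sub_eq_add_neg, zpow_add₀ hq0]
    ring
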